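/- (Ore's theorem for skew PBW extensions) Let A be a bijective skew PBW extension of a ring R with variables x_1,…,x_n. If R is a left Ore domain, then A is a left Ore domain. -/

import Mathlib

noncomputable instance (n : ℕ) : LinearOrder (Lex (Fin n → ℕ)) :=
  @Pi.Lex.linearOrder (Fin n) (fun _ => ℕ) _ (Finite.to_wellFoundedLT) _


/-- A *skew PBW extension* of a ring `R` inside a ring `A`, with variables `x 0, …, x (n-1)`. -/
structure SkewPBWExtension (R A : Type*) [Ring R] [Ring A] (n : ℕ) (x : Fin n → A) where
  ι : R →+* A
  ι_injective : Function.Injective ι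
  basis : ∀ a : A, ∃! c : (Fin n → ℕ) →₀ R,
    a = c.sum fun α r => ι r * (List.ofFn fun i => x i ^ α i).prod
  cond3 : ∀ (i : Fin n) (r : R), r ≠ 0 →
    ∃ c : R, c ≠ 0 ∧ ∃ r' : R, x i * ι r = ι c * x i + ι r'
  cond4 : ∀ i j : Fin n, ∃ c : R, c ≠ 0 ∧
    ∃ (r0 : R) (r' : Fin n → R), x j * x i = ι c * (x i * x j) + ι r0 + ∑ k, ι (r' k) * x k

/-- The skew PBW extension is *bijective*. -/
def SkewPBWExtension.IsBijective {R A : Type*} [Ring R] [Ring A] {n : ℕ} {x : Fin n → A}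
    (E : SkewPBWExtension R A n x) : Prop :=
  (∀ i : Fin n, ∃ (σ : R ≃+* R) (δ : R → R),
      ∀ r : R, x i * E.ι r = E.ι (σ r) * x i + E.ι (δ r)) ∧
  (∀ i j : Fin n, i < j → ∃ c : Rˣ, ∃ (r0 : R) (r' : Fin n → R),
      x j * x i = E.ι c * (x i * x j) + E.ι r0 + ∑ k, E.ι (r' k) * x k)

/-- A domain `R` is a *left Ore domain* if any two nonzero elements have a nonzero
common left multiple. -/
def IsLeftOreDomain (R : Type*) [Ring R] : Prop :=
  IsDomain R ∧ ∀ a b : R, a ≠ 0 → b ≠ 0 → ∃ u v : R, u * a = v * b ∧ u * a ≠ 0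

namespace OrePBW


variable {n : ℕ}

/-- total degree -/
def dsum (γ : Fin n → ℕ) : ℕ := ∑ i, γ i

/-- deg-lex key -/
noncomputable def key (γ : Fin n → ℕ) : ℕ ×ₗ Lex (Fin n → ℕ) := toLex (dsum γ, toLex γ)

lemma dsum_add (a b : Fin n → ℕ) : dsum (a + b) = dsum a + dsum b := by
  simp [dsum, Finset.sum_add_distrib]

lemma dsum_single (i : Fin n) : dsum (Pi.single i 1) = 1 := by
  simp [dsum, Finset.sum_pi_single]

lemma key_lt_iff {a b : Fin n → ℕ} :
    key a < key b ↔ dsum a < dsum b ∨ (dsum a = dsum b ∧ toLex a < toLex b) :=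
  Prod.Lex.lt_iff

lemma key_le_iff {a b : Fin n → ℕ} :
    key a ≤ key b ↔ dsum a < dsum b ∨ (dsum a = dsum b ∧ toLex a ≤ toLex b) :=
  Prod.Lex.le_iff

lemma key_injective : Function.Injective (key (n := n)) := by
  intro a b h
  have h2 : (dsum a, toLex a) = (dsum b, toLex b) := congrArg ofLex h
  have := congrArg Prod.snd h2
  exact congrArg ofLex this

lemma toLex_add_lt_toLex_add {a b : Fin n → ℕ} (h : toLex a < toLex b) (c : Fin n → ℕ) :
    toLex (a + c) < toLex (b + c) := by
  obtain ⟨i, hj, hi⟩ := h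
  exact ⟨i, fun j hji => by simpa using congrArg (· + c j) (hj j hji), by simpa using hi⟩

lemma key_add_lt_key_add {a b : Fin n → ℕ} (h : key a < key b) (c : Fin n → ℕ) :
    key (a + c) < key (b + c) := by
  rw [key_lt_iff] at h ⊢
  rcases h with h | ⟨h1, h2⟩
  · exact Or.inl (by simp [dsum_add]; omega)
  · exact Or.inr ⟨by simp [dsum_add, h1], toLex_add_lt_toLex_add h2 c⟩

lemma key_lt_of_dsum_lt {a b : Fin n → ℕ} (h : dsum a < dsum b) : key a < key b :=
  key_lt_iff.mpr (Or.inl h)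

lemma dsum_le_of_key_le {a b : Fin n → ℕ} (h : key a ≤ key b) : dsum a ≤ dsum b := by
  rcases key_le_iff.mp h with h | ⟨h, _⟩ <;> omega

lemma key_lt_of_le_of_ne {a b : Fin n → ℕ} (h : key a ≤ key b) (hne : a ≠ b) :
    key a < key b :=
  lt_of_le_of_ne h (fun hk => hne (key_injective hk))



variable {A : Type*} [Ring A]

def mono {n : ℕ} (x : Fin n → A) (α : Fin n → ℕ) : A :=
  (List.ofFn fun i => x i ^ α i).prod

lemma mono_zero {n : ℕ} (x : Fin n → A) : mono x 0 = 1 := by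
  apply List.prod_eq_one
  intro y hy
  rw [List.mem_ofFn] at hy
  obtain ⟨i, rfl⟩ := hy
  simp

lemma x_mul_mono {m : ℕ} (y : Fin m → A) (β : Fin m → ℕ) (j : Fin m)
    (h : ∀ k, k < j → β k = 0) :
    y j * mono y β = mono y (β + Pi.single j 1) := by
  induction m with
  | zero => exact j.elim0
  | succ m IH =>
    unfold mono
    rw [List.ofFn_succ, List.ofFn_succ, List.prod_cons, List.prod_cons]
    induction j using Fin.cases with
    | zero =>
      rw [← mul_assoc, ← pow_succ']
      have h1 : (β + Pi.single 0 1 : Fin (m+1) → ℕ) 0 = β 0 + 1 := by simp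
      have h2 : ∀ i : Fin m, (β + Pi.single (0 : Fin (m+1)) 1 : Fin (m+1) → ℕ) i.succ = β i.succ := by
        intro i
        simp [Pi.single_apply, Fin.succ_ne_zero]
      rw [h1]
      congr 2
    | succ j' =>
      have hβ0 : β 0 = 0 := h 0 (Fin.succ_pos j')
      have h0 : (β + Pi.single j'.succ 1 : Fin (m+1) → ℕ) 0 = 0 := by
        simp [hβ0, Pi.single_apply, (Fin.succ_ne_zero j').symm]
      rw [hβ0, h0, pow_zero, one_mul, one_mul]
      have IH' := IH (fun k => y k.succ) (fun k => β k.succ) j'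
        (fun k hk => h k.succ (by simpa using hk))
      unfold mono at IH'
      rw [IH']
      congr 1
      congr 1
      funext k
      congr 1
      simp only [Pi.add_apply]
      congr 1
      by_cases hk : k = j'
      · subst hk; simp
      · rw [Pi.single_apply, Pi.single_apply, if_neg hk,
          if_neg (fun hc => hk (Fin.succ_injective _ hc))]

lemma mono_single {n : ℕ} (x : Fin n → A) (i : Fin n) : mono x (Pi.single i 1) = x i := by
  have := x_mul_mono x 0 i (fun k _ => rfl)
  rw [mono_zero, mul_one, zero_add] at this
  exact this.symm



variable {A : Type*} [Ring A]

variable {R : Type*} [Ring R] {n : ℕ} {x : Fin n → A}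

variable (E : SkewPBWExtension R A n x)

noncomputable def coeff (a : A) : (Fin n → ℕ) →₀ R := (E.basis a).choose

lemma coeff_spec (a : A) : a = (coeff E a).sum fun α r => E.ι r * mono x α :=
  (E.basis a).choose_spec.1

lemma coeff_eq {a : A} {c : (Fin n → ℕ) →₀ R}
    (h : a = c.sum fun α r => E.ι r * mono x α) : coeff E a = c :=
  ((E.basis a).choose_spec.2 c h).symm

lemma coeff_sum (c : (Fin n → ℕ) →₀ R) :
    coeff E (c.sum fun α r => E.ι r * mono x α) = c := coeff_eq E rfl

lemma coeff_zero : coeff E (0 : A) = 0 :=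
  coeff_eq E (by simp)

lemma eq_zero_of_coeff_eq_zero {a : A} (h : coeff E a = 0) : a = 0 := by
  have := coeff_spec E a
  rw [h] at this
  simpa using this

lemma coeff_add (a b : A) : coeff E (a + b) = coeff E a + coeff E b := by
  apply coeff_eq E
  rw [Finsupp.sum_add_index (by simp) (fun α _ r s => by rw [map_add, add_mul])]
  rw [← coeff_spec E a, ← coeff_spec E b]

/-- coeff as an additive monoid hom -/
noncomputable def coeffHom : A →+ ((Fin n → ℕ) →₀ R) :=
  { toFun := coeff E, map_zero' := coeff_zero E, map_add' := coeff_add E }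

lemma coeff_iota_mul (r : R) (a : A) : coeff E (E.ι r * a) = r • coeff E a := by
  apply coeff_eq E
  conv_lhs => rw [coeff_spec E a]
  rw [Finsupp.sum, Finset.mul_sum, Finsupp.sum_smul_index (by simp)]
  rw [Finsupp.sum]
  congr 1
  funext α
  rw [← mul_assoc, ← map_mul]

lemma coeff_mono (α : Fin n → ℕ) : coeff E (mono x α) = Finsupp.single α 1 := by
  apply coeff_eq E
  rw [Finsupp.sum_single_index (by simp)]
  simp

lemma coeff_one : coeff E (1 : A) = Finsupp.single 0 1 := by
  have h : (1 : A) = mono x 0 := by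
    symm
    apply List.prod_eq_one
    intro y hy
    rw [List.mem_ofFn] at hy
    obtain ⟨i, rfl⟩ := hy
    simp
  rw [h, coeff_mono E]


section ledsec

variable {A : Type*} [Ring A] {R : Type*} [Ring R] {n : ℕ} {x : Fin n → A}
variable (E : SkewPBWExtension R A n x)

/-- `u` has coefficient `t` at `γ` and zero coefficients strictly above `γ` in deg-lex. -/
def Led (u : A) (γ : Fin n → ℕ) (t : R) : Prop :=
  coeff E u γ = t ∧ ∀ γ', key γ < key γ' → coeff E u γ' = 0

variable {E}

lemma Led.add {u v : A} {γ : Fin n → ℕ} {t s : R} (hu : Led E u γ t) (hv : Led E v γ s) :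
    Led E (u + v) γ (t + s) := by
  refine ⟨?_, fun γ' h => ?_⟩
  · rw [coeff_add, Finsupp.add_apply, hu.1, hv.1]
  · rw [coeff_add, Finsupp.add_apply, hu.2 γ' h, hv.2 γ' h, add_zero]

lemma Led.iota_mul {u : A} {γ : Fin n → ℕ} {t : R} (hu : Led E u γ t) (r : R) :
    Led E (E.ι r * u) γ (r * t) := by
  refine ⟨?_, fun γ' h => ?_⟩
  · rw [coeff_iota_mul, Finsupp.smul_apply, hu.1, smul_eq_mul]
  · rw [coeff_iota_mul, Finsupp.smul_apply, hu.2 γ' h, smul_eq_mul, mul_zero]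

lemma Led_mono (α : Fin n → ℕ) : Led E (mono x α) α 1 := by
  refine ⟨?_, fun γ' h => ?_⟩
  · rw [coeff_mono, Finsupp.single_eq_same]
  · rw [coeff_mono]
    exact Finsupp.single_eq_of_ne' (fun he => absurd (congrArg key he) (ne_of_lt h))

lemma Led.of_key_lt {u : A} {γ γ' : Fin n → ℕ} {t : R} (hu : Led E u γ t)
    (h : key γ < key γ') : Led E u γ' 0 :=
  ⟨hu.2 γ' h, fun γ'' h' => hu.2 γ'' (h.trans h')⟩

lemma Led.sum {ι' : Type*} (s : Finset ι') (f : ι' → A) (g : ι' → R) (γ : Fin n → ℕ)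
    (h : ∀ i ∈ s, Led E (f i) γ (g i)) :
    Led E (∑ i ∈ s, f i) γ (∑ i ∈ s, g i) := by
  classical
  induction s using Finset.induction_on with
  | empty => exact ⟨by rw [Finset.sum_empty, Finset.sum_empty, coeff_zero]; rfl,
      fun γ' _ => by rw [Finset.sum_empty, coeff_zero]; rfl⟩
  | insert _ _ hnot IH =>
    rw [Finset.sum_insert hnot, Finset.sum_insert hnot]
    exact (h _ (Finset.mem_insert_self _ _)).add
      (IH fun i hi => h i (Finset.mem_insert_of_mem hi))

lemma key_le_of_mem_support {u : A} {γ : Fin n → ℕ} {t : R} (hu : Led E u γ t)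
    {α : Fin n → ℕ} (hα : α ∈ (coeff E u).support) : key α ≤ key γ := by
  by_contra h
  exact (Finsupp.mem_support_iff.mp hα) (hu.2 α (lt_of_not_ge h))

lemma led_of_ne_zero {a : A} (ha : a ≠ 0) :
    ∃ γ t, t ≠ 0 ∧ Led E a γ t := by
  have hne : (coeff E a).support.Nonempty := by
    rw [Finsupp.support_nonempty_iff]
    intro h0
    exact ha (eq_zero_of_coeff_eq_zero E h0)
  obtain ⟨γ, hγ, hmax⟩ := Finset.exists_max_image (coeff E a).support key hne
  refine ⟨γ, coeff E a γ, Finsupp.mem_support_iff.mp hγ, rfl, fun γ' h => ?_⟩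
  by_contra hne'
  exact absurd (hmax γ' (Finsupp.mem_support_iff.mpr hne')) (not_le.mpr h)

end ledsec

section ksec

variable {A : Type*} [Ring A] {R : Type*} [Ring R] {n : ℕ} {x : Fin n → A}
variable {E : SkewPBWExtension R A n x}

lemma key_lt_key_add_single (κ : Fin n → ℕ) (i : Fin n) :
    key κ < key (κ + Pi.single i 1) :=
  key_lt_of_dsum_lt (by rw [dsum_add, dsum_single]; omega)

lemma K1 [IsDomain R] (σ : Fin n → R ≃+* R) (δ : Fin n → R → R)
    (hσ : ∀ i r, x i * E.ι r = E.ι (σ i r) * x i + E.ι (δ i r))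
    (i : Fin n) {κ : Fin n → ℕ} {b : A} {t : R} (hb : Led E b κ t)
    (H : ∀ β, key β ≤ key κ →
      ∃ c, c ≠ 0 ∧ Led E (x i * mono x β) (β + Pi.single i 1) c) :
    ∃ s, Led E (x i * b) (κ + Pi.single i 1) s ∧ (t ≠ 0 → s ≠ 0) := by
  classical
  obtain ⟨cκ, hcκ0, hcκ⟩ := H κ le_rfl
  have hκτ : key κ < key (κ + Pi.single i 1) := key_lt_key_add_single κ i
  have hxib : x i * b = ∑ α ∈ (coeff E b).support,
      (E.ι (σ i (coeff E b α)) * (x i * mono x α) + E.ι (δ i (coeff E b α)) * mono x α) := by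
    conv_lhs => rw [coeff_spec E b]
    rw [Finsupp.sum, Finset.mul_sum]
    refine Finset.sum_congr rfl fun α _ => ?_
    rw [← mul_assoc, hσ i, add_mul, mul_assoc]
  have hterm : ∀ α ∈ (coeff E b).support,
      Led E (E.ι (σ i (coeff E b α)) * (x i * mono x α) + E.ι (δ i (coeff E b α)) * mono x α)
        (κ + Pi.single i 1) (if α = κ then σ i t * cκ else 0) := by
    intro α hα
    have hle : key α ≤ key κ := key_le_of_mem_support hb hα
    have h2 : Led E (E.ι (δ i (coeff E b α)) * mono x α) (κ + Pi.single i 1) 0 :=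
      ((Led_mono α).iota_mul _).of_key_lt (lt_of_le_of_lt hle hκτ)
    by_cases hακ : α = κ
    · subst hακ
      rw [if_pos rfl, ← hb.1]
      have h1 := hcκ.iota_mul (σ i (coeff E b α))
      simpa using h1.add h2
    · rw [if_neg hακ]
      obtain ⟨cα, _, hcα⟩ := H α hle
      have hlt : key (α + Pi.single i 1) < key (κ + Pi.single i 1) :=
        key_add_lt_key_add (key_lt_of_le_of_ne hle hακ) _
      have h1 := ((hcα.iota_mul (σ i (coeff E b α)))).of_key_lt hlt
      simpa using h1.add h2
  have hsum : Led E (x i * b) (κ + Pi.single i 1)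
      (∑ α ∈ (coeff E b).support, if α = κ then σ i t * cκ else 0) := by
    rw [hxib]; exact Led.sum _ _ _ _ hterm
  rw [Finset.sum_ite_eq' _ _ (fun _ => σ i t * cκ)] at hsum
  have hval : (if κ ∈ (coeff E b).support then σ i t * cκ else 0) = σ i t * cκ := by
    by_cases hm : κ ∈ (coeff E b).support
    · rw [if_pos hm]
    · rw [if_neg hm]
      have ht0 : t = 0 := by rw [← hb.1]; exact Finsupp.notMem_support_iff.mp hm
      rw [ht0, map_zero, zero_mul]
  rw [hval] at hsum
  refine ⟨σ i t * cκ, hsum, fun ht => mul_ne_zero (fun h0 => ht ?_) hcκ0⟩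
  have := (σ i).injective (h0.trans (map_zero (σ i)).symm)
  exact this

end ksec

section k0sec

variable {A : Type*} [Ring A] {R : Type*} [Ring R] {n : ℕ} {x : Fin n → A}
variable {E : SkewPBWExtension R A n x}

lemma K0 [IsDomain R] (σ : Fin n → R ≃+* R) (δ : Fin n → R → R)
    (hσ : ∀ i r, x i * E.ι r = E.ι (σ i r) * x i + E.ι (δ i r))
    (hb2 : ∀ i j : Fin n, i < j → ∃ c : Rˣ, ∃ (r0 : R) (r' : Fin n → R),
      x j * x i = E.ι c * (x i * x j) + E.ι r0 + ∑ k, E.ι (r' k) * x k)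
    (i : Fin n) (α : Fin n → ℕ) :
    ∃ c, c ≠ 0 ∧ Led E (x i * mono x α) (α + Pi.single i 1) c := by
  classical
  suffices H : ∀ N, ∀ (i : Fin n) (α : Fin n → ℕ), dsum α * n + i.val < N →
      ∃ c, c ≠ 0 ∧ Led E (x i * mono x α) (α + Pi.single i 1) c from
    H _ i α (Nat.lt_succ_self _)
  intro N
  induction N with
  | zero => exact fun i α h => absurd h (Nat.not_lt_zero _)
  | succ N IH =>
    intro i α hN
    have hn : 0 < n := i.pos
    by_cases hα : α = 0
    · subst hα
      refine ⟨1, one_ne_zero, ?_⟩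
      rw [mono_zero, mul_one]
      have hx : x i = mono x (0 + Pi.single i 1) := by rw [zero_add, mono_single]
      rw [hx]
      exact Led_mono _
    · -- least nonzero index j
      have hSne : (Finset.univ.filter (fun k => α k ≠ 0)).Nonempty := by
        obtain ⟨k, hk⟩ := Function.ne_iff.mp hα
        refine ⟨k, ?_⟩
        simp only [Finset.mem_filter, Finset.mem_univ, true_and]
        simpa using hk
      obtain ⟨j, hjmem', hjle⟩ : ∃ j, j ∈ Finset.univ.filter (fun k => α k ≠ 0) ∧
          ∀ k ∈ Finset.univ.filter (fun k : Fin n => α k ≠ 0), j ≤ k :=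
        ⟨_, Finset.min'_mem _ hSne, fun k hk => Finset.min'_le _ k hk⟩
      have hjmem : α j ≠ 0 := (Finset.mem_filter.mp hjmem').2
      have hlow : ∀ k, k < j → α k = 0 := by
        intro k hk
        by_contra hknz
        exact absurd (hjle k (Finset.mem_filter.mpr ⟨Finset.mem_univ _, hknz⟩))
          (not_le.mpr hk)
      set α' := Function.update α j (α j - 1) with hα'def
      have hα'low : ∀ k, k < j → α' k = 0 := by
        intro k hk
        rw [hα'def, Function.update_of_ne (ne_of_lt hk)]
        exact hlow k hk
      have hdecomp : α' + Pi.single j 1 = α := by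
        funext k
        by_cases hk : k = j
        · subst hk
          simp only [Pi.add_apply, hα'def, Function.update_self, Pi.single_eq_same]
          omega
        · simp only [Pi.add_apply, hα'def, Function.update_of_ne hk,
            Pi.single_eq_of_ne hk, add_zero]
      have hmono : x j * mono x α' = mono x α := by
        rw [x_mul_mono x α' j hα'low, hdecomp]
      have hdsum : dsum α = dsum α' + 1 := by
        rw [← hdecomp, dsum_add, dsum_single]
      have hmul : dsum α * n = dsum α' * n + n := by
        rw [hdsum, Nat.succ_mul]
      by_cases hij : i ≤ j
      · have hlow2 : ∀ k, k < i → α k = 0 := fun k hk => hlow k (lt_of_lt_of_le hk hij)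
        refine ⟨1, one_ne_zero, ?_⟩
        rw [x_mul_mono x α i hlow2]
        exact Led_mono _
      · have hji : j < i := lt_of_not_ge hij
        have hji' : j.val < i.val := hji
        have hi' : i.val < n := i.2
        obtain ⟨c, r0, r', h4⟩ := hb2 j i hji
        have hN' : dsum α' * n + i.val < N := by omega
        obtain ⟨c', hc'0, hc'⟩ := IH i α' hN'
        have hκd : dsum (α' + Pi.single i 1) = dsum α := by
          rw [dsum_add, dsum_single, hdsum]
        have HH : ∀ β, key β ≤ key (α' + Pi.single i 1) →
            ∃ cc, cc ≠ 0 ∧ Led E (x j * mono x β) (β + Pi.single j 1) cc := by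
          intro β hβ
          have hdβ : dsum β ≤ dsum α := le_trans (dsum_le_of_key_le hβ) (le_of_eq hκd)
          have h1 : dsum β * n ≤ dsum α * n := Nat.mul_le_mul_right n hdβ
          exact IH j β (by omega)
        obtain ⟨s, hs, hs0⟩ := K1 σ δ hσ j hc' HH
        have hsne : s ≠ 0 := hs0 hc'0
        have hτ : (α' + Pi.single i 1) + Pi.single j 1 = α + Pi.single i 1 := by
          rw [add_right_comm, hdecomp]
        rw [hτ] at hs
        have hre : x i * mono x α = E.ι ↑c * (x j * (x i * mono x α'))
            + E.ι r0 * mono x α' + ∑ k, E.ι (r' k) * (x k * mono x α') := by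
          rw [← hmono, ← mul_assoc, h4]
          simp [add_mul, Finset.sum_mul, mul_assoc]
        have hdτ : dsum (α + Pi.single i 1) = dsum α + 1 := by
          rw [dsum_add, dsum_single]
        have hP1 : Led E (E.ι ↑c * (x j * (x i * mono x α'))) (α + Pi.single i 1) (↑c * s) :=
          hs.iota_mul _
        have hP2 : Led E (E.ι r0 * mono x α') (α + Pi.single i 1) 0 :=
          ((Led_mono α').iota_mul r0).of_key_lt (key_lt_of_dsum_lt (by omega))
        have hP3 : Led E (∑ k, E.ι (r' k) * (x k * mono x α')) (α + Pi.single i 1)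
            (∑ _k : Fin n, (0 : R)) := by
          refine Led.sum _ _ _ _ (fun k _ => ?_)
          have hk' : k.val < n := k.2
          obtain ⟨ck, _, hck⟩ := IH k α' (by omega)
          have hdk : dsum (α' + Pi.single k 1) = dsum α := by
            rw [dsum_add, dsum_single, hdsum]
          exact (hck.iota_mul (r' k)).of_key_lt (key_lt_of_dsum_lt (by omega))
        refine ⟨↑c * s, mul_ne_zero (Units.ne_zero c) hsne, ?_⟩
        rw [hre]
        have := (hP1.add hP2).add hP3
        simpa using this

end k0sec

section kmainsec

variable {A : Type*} [Ring A] {R : Type*} [Ring R] {n : ℕ} {x : Fin n → A}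
variable {E : SkewPBWExtension R A n x} [IsDomain R]
variable (σ : Fin n → R ≃+* R) (δ : Fin n → R → R)

lemma mono_decomp (x : Fin n → A) {α : Fin n → ℕ} (hα : α ≠ 0) :
    ∃ (j : Fin n) (α' : Fin n → ℕ), α' + Pi.single j 1 = α ∧
      x j * mono x α' = mono x α := by
  classical
  have hSne : (Finset.univ.filter (fun k => α k ≠ 0)).Nonempty := by
    obtain ⟨k, hk⟩ := Function.ne_iff.mp hα
    refine ⟨k, ?_⟩
    simp only [Finset.mem_filter, Finset.mem_univ, true_and]
    simpa using hk
  obtain ⟨j, hjmem', hjle⟩ : ∃ j, j ∈ Finset.univ.filter (fun k => α k ≠ 0) ∧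
      ∀ k ∈ Finset.univ.filter (fun k : Fin n => α k ≠ 0), j ≤ k :=
    ⟨_, Finset.min'_mem _ hSne, fun k hk => Finset.min'_le _ k hk⟩
  have hjmem : α j ≠ 0 := (Finset.mem_filter.mp hjmem').2
  have hlow : ∀ k, k < j → α k = 0 := by
    intro k hk
    by_contra hknz
    exact absurd (hjle k (Finset.mem_filter.mpr ⟨Finset.mem_univ _, hknz⟩))
      (not_le.mpr hk)
  refine ⟨j, Function.update α j (α j - 1), ?_, ?_⟩
  · funext k
    by_cases hk : k = j
    · subst hk
      simp only [Pi.add_apply, Function.update_self, Pi.single_eq_same]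
      omega
    · simp only [Pi.add_apply, Function.update_of_ne hk, Pi.single_eq_of_ne hk, add_zero]
  · have hα'low : ∀ k, k < j → Function.update α j (α j - 1) k = 0 := by
      intro k hk
      rw [Function.update_of_ne (ne_of_lt hk)]
      exact hlow k hk
    rw [x_mul_mono x _ j hα'low]
    congr 1
    funext k
    by_cases hk : k = j
    · subst hk
      simp only [Pi.add_apply, Function.update_self, Pi.single_eq_same]
      omega
    · simp only [Pi.add_apply, Function.update_of_ne hk, Pi.single_eq_of_ne hk, add_zero]

lemma Kmono (hσ : ∀ i r, x i * E.ι r = E.ι (σ i r) * x i + E.ι (δ i r))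
    (hb2 : ∀ i j : Fin n, i < j → ∃ c : Rˣ, ∃ (r0 : R) (r' : Fin n → R),
      x j * x i = E.ι c * (x i * x j) + E.ι r0 + ∑ k, E.ι (r' k) * x k)
    (α : Fin n → ℕ) {b : A} {κ : Fin n → ℕ} {t : R} (hb : Led E b κ t) :
    ∃ s, Led E (mono x α * b) (α + κ) s ∧ (t ≠ 0 → s ≠ 0) := by
  classical
  suffices H : ∀ N (α : Fin n → ℕ), dsum α < N →
      ∃ s, Led E (mono x α * b) (α + κ) s ∧ (t ≠ 0 → s ≠ 0) from
    H _ α (Nat.lt_succ_self _)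
  intro N
  induction N with
  | zero => exact fun α h => absurd h (Nat.not_lt_zero _)
  | succ N IH =>
    intro α hN
    by_cases hα : α = 0
    · subst hα
      rw [mono_zero, one_mul]
      exact ⟨t, by rw [zero_add]; exact hb, id⟩
    · obtain ⟨j, α', hadd, hmono⟩ := mono_decomp x hα
      have hds : dsum α = dsum α' + 1 := by rw [← hadd, dsum_add, dsum_single]
      obtain ⟨s', hs', hs'0⟩ := IH α' (by omega)
      obtain ⟨s, hs, hs0⟩ := K1 σ δ hσ j hs'
        (fun β _ => K0 σ δ hσ hb2 j β)
      refine ⟨s, ?_, fun ht => hs0 (hs'0 ht)⟩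
      have hloc : (α' + κ) + Pi.single j 1 = α + κ := by
        rw [add_right_comm, hadd]
      rw [hloc] at hs
      rw [← hmono, mul_assoc]
      exact hs

lemma Kmain (hσ : ∀ i r, x i * E.ι r = E.ι (σ i r) * x i + E.ι (δ i r))
    (hb2 : ∀ i j : Fin n, i < j → ∃ c : Rˣ, ∃ (r0 : R) (r' : Fin n → R),
      x j * x i = E.ι c * (x i * x j) + E.ι r0 + ∑ k, E.ι (r' k) * x k)
    {a b : A} {κa κb : Fin n → ℕ} {ta tb : R}
    (ha : Led E a κa ta) (hb : Led E b κb tb) :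
    ∃ s, Led E (a * b) (κa + κb) s ∧ (ta ≠ 0 → tb ≠ 0 → s ≠ 0) := by
  classical
  obtain ⟨sκ, hsκ, hsκ0⟩ := Kmono σ δ hσ hb2 κa hb
  have hab : a * b = ∑ α ∈ (coeff E a).support,
      E.ι (coeff E a α) * (mono x α * b) := by
    conv_lhs => rw [coeff_spec E a]
    rw [Finsupp.sum, Finset.sum_mul]
    exact Finset.sum_congr rfl fun α _ => by rw [mul_assoc]
  have hterm : ∀ α ∈ (coeff E a).support,
      Led E (E.ι (coeff E a α) * (mono x α * b)) (κa + κb)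
        (if α = κa then ta * sκ else 0) := by
    intro α hα
    have hle : key α ≤ key κa := key_le_of_mem_support ha hα
    by_cases hακ : α = κa
    · subst hακ
      rw [if_pos rfl, ← ha.1]
      exact hsκ.iota_mul _
    · rw [if_neg hακ]
      obtain ⟨sα, hsα, _⟩ := Kmono σ δ hσ hb2 α hb
      exact (hsα.iota_mul _).of_key_lt
        (key_add_lt_key_add (key_lt_of_le_of_ne hle hακ) κb)
  have hsum : Led E (a * b) (κa + κb)
      (∑ α ∈ (coeff E a).support, if α = κa then ta * sκ else 0) := by
    rw [hab]; exact Led.sum _ _ _ _ hterm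
  rw [Finset.sum_ite_eq' _ _ (fun _ => ta * sκ)] at hsum
  have hval : (if κa ∈ (coeff E a).support then ta * sκ else 0) = ta * sκ := by
    by_cases hm : κa ∈ (coeff E a).support
    · rw [if_pos hm]
    · rw [if_neg hm]
      have : ta = 0 := by rw [← ha.1]; exact Finsupp.notMem_support_iff.mp hm
      rw [this, zero_mul]
  rw [hval] at hsum
  exact ⟨ta * sκ, hsum, fun hta htb => mul_ne_zero hta (hsκ0 htb)⟩

end kmainsec

section domsec

variable {A : Type*} [Ring A] {R : Type*} [Ring R] {n : ℕ} {x : Fin n → A}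
variable {E : SkewPBWExtension R A n x} [IsDomain R]
variable (σ : Fin n → R ≃+* R) (δ : Fin n → R → R)

lemma pbw_mul_ne_zero (hσ : ∀ i r, x i * E.ι r = E.ι (σ i r) * x i + E.ι (δ i r))
    (hb2 : ∀ i j : Fin n, i < j → ∃ c : Rˣ, ∃ (r0 : R) (r' : Fin n → R),
      x j * x i = E.ι c * (x i * x j) + E.ι r0 + ∑ k, E.ι (r' k) * x k)
    {a b : A} (ha : a ≠ 0) (hb : b ≠ 0) : a * b ≠ 0 := by
  obtain ⟨κa, ta, hta, hla⟩ := led_of_ne_zero (E := E) ha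
  obtain ⟨κb, tb, htb, hlb⟩ := led_of_ne_zero (E := E) hb
  obtain ⟨s, hs, hs0⟩ := Kmain σ δ hσ hb2 hla hlb
  intro h0
  have hc : coeff E (a * b) (κa + κb) = s := hs.1
  rw [h0, coeff_zero] at hc
  exact (hs0 hta htb) hc.symm

lemma pbw_one_ne_zero (E : SkewPBWExtension R A n x) : (1 : A) ≠ 0 := by
  intro h
  have h1 := coeff_one E
  rw [h, coeff_zero] at h1
  have h2 := DFunLike.congr_fun h1 (0 : Fin n → ℕ)
  simp at h2

end domsec

section ldsec

variable {R : Type*} [Ring R] [IsDomain R]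

lemma LD (hOre : ∀ a b : R, a ≠ 0 → b ≠ 0 → ∃ u v : R, u * a = v * b ∧ u * a ≠ 0) :
    ∀ (N : ℕ) (ι : Type) [Fintype ι] (v : ι → (Fin N → R)), N < Fintype.card ι →
      ∃ c : ι → R, c ≠ 0 ∧ ∑ i, c i • v i = 0 := by
  intro N
  induction N with
  | zero =>
    intro ι _ v hcard
    classical
    have hne : Nonempty ι := Fintype.card_pos_iff.mp hcard
    obtain ⟨i₀⟩ := hne
    refine ⟨Pi.single i₀ 1, Function.ne_iff.mpr ⟨i₀, by simp⟩, ?_⟩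
    funext j
    exact j.elim0
  | succ N IH =>
    intro ι _ v hcard
    classical
    by_cases hz : ∀ i, v i 0 = 0
    · obtain ⟨c, hc0, hsum⟩ := IH ι (fun i j => v i j.succ) (by omega)
      refine ⟨c, hc0, ?_⟩
      funext j
      rw [Pi.zero_apply]
      have happ : (∑ i, c i • v i) j = ∑ i, c i * v i j := by
        rw [Finset.sum_apply]
        exact Finset.sum_congr rfl fun i _ => rfl
      induction j using Fin.cases with
      | zero =>
        rw [happ]
        simp [hz]
      | succ j' =>
        have h5 := congr_fun hsum j'
        rw [Finset.sum_apply] at h5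
        rw [happ]
        simpa using h5
    · push_neg at hz
      obtain ⟨i₀, hi₀⟩ := hz
      have hUT : ∀ i : ι, ∃ UT : R × R, UT.1 ≠ 0 ∧ UT.1 * v i 0 = UT.2 * v i₀ 0 := by
        intro i
        by_cases h : v i 0 = 0
        · exact ⟨(1, 0), one_ne_zero, by rw [h, mul_zero, zero_mul]⟩
        · obtain ⟨u, t, h1, h2⟩ := hOre (v i 0) (v i₀ 0) h hi₀
          exact ⟨(u, t), fun h0 => h2 (by rw [show u = 0 from h0, zero_mul]), h1⟩
      choose UT hU hUeq using hUT
      set U : ι → R := fun i => (UT i).1 with hUdef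
      set T : ι → R := fun i => (UT i).2 with hTdef
      have hcards : N < Fintype.card {i : ι // i ≠ i₀} := by
        have h1 : Fintype.card {i : ι // ¬ (i = i₀)}
            = Fintype.card ι - Fintype.card {i : ι // i = i₀} :=
          Fintype.card_subtype_compl _
        have h2 : Fintype.card {i : ι // i = i₀} = 1 := Fintype.card_subtype_eq i₀
        have h3 : Fintype.card {i : ι // i ≠ i₀} = Fintype.card ι - 1 := by
          rw [← h2, ← h1]
        omega
      obtain ⟨c', hc'0, hc'sum⟩ := IH {i : ι // i ≠ i₀}
        (fun i j => U i.1 * v i.1 j.succ - T i.1 * v i₀ j.succ) hcards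
      set c : ι → R := fun i =>
        if h : i = i₀ then -(∑ i' : {i : ι // i ≠ i₀}, c' i' * T i'.1)
        else c' ⟨i, h⟩ * U i with hcdef
      have hci₀ : c i₀ = -(∑ i' : {i : ι // i ≠ i₀}, c' i' * T i'.1) := by
        rw [hcdef]; exact dif_pos rfl
      have hcne : ∀ i' : {i : ι // i ≠ i₀}, c i'.1 = c' i' * U i'.1 := by
        intro i'
        rw [hcdef]
        simp only [dif_neg i'.2]
      obtain ⟨i₁, hi₁⟩ := Function.ne_iff.mp hc'0
      refine ⟨c, Function.ne_iff.mpr ⟨i₁.1, ?_⟩, ?_⟩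
      · rw [hcne i₁]
        exact mul_ne_zero hi₁ (hU i₁.1)
      · have hsplit : ∑ i, c i • v i =
            c i₀ • v i₀ + ∑ i' : {i : ι // i ≠ i₀}, c i'.1 • v i'.1 := by
          rw [← Finset.add_sum_erase Finset.univ (fun i => c i • v i) (Finset.mem_univ i₀)]
          congr 1
          exact Finset.sum_subtype (Finset.univ.erase i₀)
            (fun x => by simp [Finset.mem_erase]) (fun i => c i • v i)
        funext j
        rw [Pi.zero_apply]
        have happ : (∑ i, c i • v i) j
            = c i₀ * v i₀ j + ∑ i' : {i : ι // i ≠ i₀}, (c' i' * U i'.1) * v i'.1 j := by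
          rw [hsplit, Pi.add_apply, Finset.sum_apply]
          congr 1
          exact Finset.sum_congr rfl fun i' _ => by rw [Pi.smul_apply, smul_eq_mul, hcne i']
        rw [happ]
        induction j using Fin.cases with
        | zero =>
          have h1 : ∀ i' : {i : ι // i ≠ i₀},
              (c' i' * U i'.1) * v i'.1 0 = (c' i' * T i'.1) * v i₀ 0 := fun i' => by
            rw [mul_assoc, hUeq i'.1, mul_assoc]
          rw [Finset.sum_congr rfl (fun i' _ => h1 i'), ← Finset.sum_mul, hci₀,
            neg_mul, neg_add_cancel]
        | succ j' =>
          have hw := congr_fun hc'sum j'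
          rw [Finset.sum_apply, Pi.zero_apply] at hw
          have hw2 : ∑ i' : {i : ι // i ≠ i₀}, (c' i' * (U i'.1 * v i'.1 j'.succ)
              - c' i' * (T i'.1 * v i₀ j'.succ)) = 0 := by
            simpa [mul_sub] using hw
          rw [Finset.sum_sub_distrib] at hw2
          have h4 : ∑ i' : {i : ι // i ≠ i₀}, (c' i' * U i'.1) * v i'.1 j'.succ
              = ∑ i' : {i : ι // i ≠ i₀}, (c' i' * T i'.1) * v i₀ j'.succ := by
            calc ∑ i' : {i : ι // i ≠ i₀}, (c' i' * U i'.1) * v i'.1 j'.succ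
                = ∑ i' : {i : ι // i ≠ i₀}, c' i' * (U i'.1 * v i'.1 j'.succ) :=
                  Finset.sum_congr rfl fun i' _ => mul_assoc _ _ _
              _ = ∑ i' : {i : ι // i ≠ i₀}, c' i' * (T i'.1 * v i₀ j'.succ) :=
                  sub_eq_zero.mp hw2
              _ = ∑ i' : {i : ι // i ≠ i₀}, (c' i' * T i'.1) * v i₀ j'.succ :=
                  Finset.sum_congr rfl fun i' _ => (mul_assoc _ _ _).symm
          rw [h4, ← Finset.sum_mul, hci₀, neg_mul, neg_add_cancel]

end ldsec

section countsec

lemma exists_two_pow_gt (D n : ℕ) : ∃ l : ℕ, (l * D + 1) ^ n < 2 ^ l := by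
  have hlit := isLittleO_pow_const_const_pow_of_one_lt (R := ℝ) n
    (r := 2) (by norm_num)
  have hev := hlit.bound (c := 1/(2*((D:ℝ)+1)^n)) (by positivity)
  rw [Filter.eventually_atTop] at hev
  obtain ⟨l₀, hl₀⟩ := hev
  refine ⟨max l₀ 1, ?_⟩
  set l := max l₀ 1 with hl
  have h1 : (1:ℕ) ≤ l := le_max_right _ _
  have h2 := hl₀ l (le_max_left _ _)
  have hnorm2 : ‖(2:ℝ)^l‖ = 2^l := by
    rw [Real.norm_eq_abs, abs_of_nonneg (by positivity)]
  have hnorml : ‖((l:ℝ))^n‖ = (l:ℝ)^n := by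
    rw [Real.norm_eq_abs, abs_of_nonneg (by positivity)]
  rw [hnorm2, hnorml] at h2
  have hb : ((l * D + 1 : ℕ) : ℝ) ≤ ((D:ℝ)+1) * l := by
    push_cast
    have h1' : (1:ℝ) ≤ l := by exact_mod_cast h1
    nlinarith [Nat.cast_nonneg (α := ℝ) D, Nat.cast_nonneg (α := ℝ) l]
  have hpos : (0:ℝ) < 2^l := by positivity
  have hkey : ((l * D + 1 : ℕ) : ℝ)^n < 2^l := by
    calc ((l * D + 1 : ℕ) : ℝ)^n ≤ (((D:ℝ)+1) * l)^n :=
          pow_le_pow_left₀ (by positivity) hb n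
      _ = ((D:ℝ)+1)^n * (l:ℝ)^n := by rw [mul_pow]
      _ ≤ ((D:ℝ)+1)^n * (1/(2*((D:ℝ)+1)^n) * 2^l) :=
          mul_le_mul_of_nonneg_left h2 (by positivity)
      _ = 2^l / 2 := by
          have hD : ((D:ℝ)+1)^n ≠ 0 := by positivity
          field_simp
      _ < 2^l := by linarith
  have : ((l * D + 1) ^ n : ℕ) < ((2:ℕ) ^ l : ℕ) := by
    have := hkey
    push_cast at this
    exact_mod_cast this
  exact this

end countsec

section wordsec

variable {A : Type*} [Ring A] {R : Type*} [Ring R] {n : ℕ} {x : Fin n → A}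
variable {E : SkewPBWExtension R A n x} [IsDomain R]

/-- word in two letters, with letters multiplied on the right -/
def wrd (a b : A) {l : ℕ} (s : Fin l → Bool) : A :=
  ((List.ofFn fun i => if s i then a else b).reverse).prod

lemma wrd_zero (a b : A) (s : Fin 0 → Bool) : wrd a b s = 1 := by
  simp [wrd]

lemma wrd_cons (a b : A) {l : ℕ} (c : Bool) (t : Fin l → Bool) :
    wrd a b (Fin.cons c t) = wrd a b t * (if c then a else b) := by
  simp [wrd, List.ofFn_succ]

lemma wrd_indep (hA1 : (1:A) ≠ 0)
    (hmul : ∀ {u v : A}, u ≠ 0 → v ≠ 0 → u * v ≠ 0)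
    {a b : A} (ha : a ≠ 0) (hb : b ≠ 0)
    (hnore : ∀ u v : A, u * a = v * b → u * a = 0) :
    ∀ (l : ℕ) (g : (Fin l → Bool) → A), (∑ s, g s * wrd a b s) = 0 → ∀ s, g s = 0 := by
  intro l
  induction l with
  | zero =>
    intro g hg s
    rw [Fintype.sum_unique] at hg
    rw [wrd_zero, mul_one] at hg
    exact (congrArg g (Subsingleton.elim s _)).trans hg
  | succ l IH =>
    intro g hg s
    have hre : ∑ s : Fin (l+1) → Bool, g s * wrd a b s
        = (∑ t : Fin l → Bool, g (Fin.cons true t) * wrd a b t) * a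
          + (∑ t : Fin l → Bool, g (Fin.cons false t) * wrd a b t) * b := by
      rw [← Equiv.sum_comp (Fin.consEquiv (fun _ : Fin (l+1) => Bool))
        (fun s => g s * wrd a b s), Fintype.sum_prod_type, Fintype.sum_bool]
      congr 1
      · rw [Finset.sum_mul]
        refine Finset.sum_congr rfl fun t _ => ?_
        show g (Fin.cons true t) * wrd a b (Fin.cons true t) = _
        rw [wrd_cons, if_pos rfl, mul_assoc]
      · rw [Finset.sum_mul]
        refine Finset.sum_congr rfl fun t _ => ?_
        show g (Fin.cons false t) * wrd a b (Fin.cons false t) = _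
        rw [wrd_cons, if_neg (by simp), mul_assoc]
    rw [hre] at hg
    set X := ∑ t : Fin l → Bool, g (Fin.cons true t) * wrd a b t with hX
    set Y := ∑ t : Fin l → Bool, g (Fin.cons false t) * wrd a b t with hY
    have hXa : X * a = (-Y) * b := by
      rw [neg_mul]
      exact eq_neg_of_add_eq_zero_left hg
    have hX0 : X * a = 0 := hnore X (-Y) hXa
    have hY0 : Y * b = 0 := by
      rw [hX0, zero_add] at hg
      exact hg
    have hXz : X = 0 := by
      by_contra hXne
      exact (hmul hXne ha) hX0
    have hYz : Y = 0 := by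
      by_contra hYne
      exact (hmul hYne hb) hY0
    have h1 := IH (fun t => g (Fin.cons true t)) hXz
    have h2 := IH (fun t => g (Fin.cons false t)) hYz
    have hs : s = Fin.cons (s 0) (Fin.tail s) := (Fin.cons_self_tail s).symm
    rw [hs]
    cases hb0 : s 0 with
    | true => exact h1 (Fin.tail s)
    | false => exact h2 (Fin.tail s)

lemma wrd_led (σ : Fin n → R ≃+* R) (δ : Fin n → R → R)
    (hσ : ∀ i r, x i * E.ι r = E.ι (σ i r) * x i + E.ι (δ i r))
    (hb2 : ∀ i j : Fin n, i < j → ∃ c : Rˣ, ∃ (r0 : R) (r' : Fin n → R),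
      x j * x i = E.ι c * (x i * x j) + E.ι r0 + ∑ k, E.ι (r' k) * x k)
    {a b : A} {κa κb : Fin n → ℕ} {ta tb : R}
    (hla : Led E a κa ta) (hta : ta ≠ 0) (hlb : Led E b κb tb) (htb : tb ≠ 0) :
    ∀ (l : ℕ) (s : Fin l → Bool), ∃ γ t, t ≠ 0 ∧ Led E (wrd a b s) γ t ∧
      dsum γ ≤ l * (max (dsum κa) (dsum κb)) := by
  intro l
  induction l with
  | zero =>
    intro s
    refine ⟨0, 1, one_ne_zero, ?_, by simp [dsum]⟩
    rw [wrd_zero, ← mono_zero x]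
    exact Led_mono 0
  | succ l IH =>
    intro s
    obtain ⟨γ', t', ht', hled', hd'⟩ := IH (Fin.tail s)
    have hs : s = Fin.cons (s 0) (Fin.tail s) := (Fin.cons_self_tail s).symm
    cases hb0 : s 0 with
    | true =>
      obtain ⟨t'', hled'', h0⟩ := Kmain σ δ hσ hb2 hled' hla
      refine ⟨γ' + κa, t'', h0 ht' hta, ?_, ?_⟩
      · rw [hs, wrd_cons, hb0, if_pos rfl]
        exact hled''
      · rw [dsum_add]
        have h1 : dsum κa ≤ max (dsum κa) (dsum κb) := le_max_left _ _
        have h2 : l * (max (dsum κa) (dsum κb)) ≥ dsum γ' := hd'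
        have : (l+1) * (max (dsum κa) (dsum κb))
            = l * (max (dsum κa) (dsum κb)) + max (dsum κa) (dsum κb) := by ring
        omega
    | false =>
      obtain ⟨t'', hled'', h0⟩ := Kmain σ δ hσ hb2 hled' hlb
      refine ⟨γ' + κb, t'', h0 ht' htb, ?_, ?_⟩
      · rw [hs, wrd_cons, hb0, if_neg (by simp)]
        exact hled''
      · rw [dsum_add]
        have h1 : dsum κb ≤ max (dsum κa) (dsum κb) := le_max_right _ _
        have h2 : l * (max (dsum κa) (dsum κb)) ≥ dsum γ' := hd'
        have : (l+1) * (max (dsum κa) (dsum κb))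
            = l * (max (dsum κa) (dsum κb)) + max (dsum κa) (dsum κb) := by ring
        omega

end wordsec

end OrePBW

/-- (Ore's theorem) If `A` is a bijective skew PBW extension of a left Ore domain `R`,
then `A` is a left Ore domain. -/
theorem skewPBWExtension_isLeftOreDomain {R A : Type*} [Ring R] [Ring A] {n : ℕ}
    {x : Fin n → A} (E : SkewPBWExtension R A n x) (hbij : E.IsBijective)
    (hR : IsLeftOreDomain R) : IsLeftOreDomain A := by
  classical
  obtain ⟨hσall, hb2⟩ := hbij
  choose σ δ hσ using hσall
  haveI : IsDomain R := hR.1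
  have hOre := hR.2
  haveI : Nontrivial A := ⟨1, 0, OrePBW.pbw_one_ne_zero E⟩
  have hmul : ∀ {u v : A}, u ≠ 0 → v ≠ 0 → u * v ≠ 0 :=
    fun hu hv => OrePBW.pbw_mul_ne_zero σ δ hσ hb2 hu hv
  haveI : NoZeroDivisors A := ⟨fun {u v} huv => by
    by_contra hcontra
    push_neg at hcontra
    exact hmul hcontra.1 hcontra.2 huv⟩
  refine ⟨NoZeroDivisors.to_isDomain A, ?_⟩
  intro a b ha hb
  by_contra hcon
  push_neg at hcon
  obtain ⟨κa, ta, hta, hla⟩ := OrePBW.led_of_ne_zero (E := E) ha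
  obtain ⟨κb, tb, htb, hlb⟩ := OrePBW.led_of_ne_zero (E := E) hb
  set D := max (OrePBW.dsum κa) (OrePBW.dsum κb) with hD
  obtain ⟨l, hl⟩ := OrePBW.exists_two_pow_gt D n
  set m := l * D with hm
  set T : Finset (Fin n → ℕ) := Fintype.piFinset (fun _ : Fin n => Finset.range (m+1)) with hT
  have hTcard : T.card = (m+1)^n := by
    rw [hT, Fintype.card_piFinset]
    simp
  have hsupp : ∀ s : Fin l → Bool,
      ∀ γ ∈ (OrePBW.coeff E (OrePBW.wrd a b s)).support, γ ∈ T := by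
    intro s γ hγ
    obtain ⟨γs, ts, hts, hleds, hds⟩ := OrePBW.wrd_led σ δ hσ hb2 hla hta hlb htb l s
    have hkey := OrePBW.key_le_of_mem_support hleds hγ
    have hd1 : OrePBW.dsum γ ≤ m := le_trans (OrePBW.dsum_le_of_key_le hkey) hds
    rw [hT, Fintype.mem_piFinset]
    intro i
    rw [Finset.mem_range]
    have hi : γ i ≤ OrePBW.dsum γ :=
      Finset.single_le_sum (f := γ) (fun _ _ => Nat.zero_le _) (Finset.mem_univ i)
    omega
  set N := T.card with hN
  have hNcard : Fintype.card {γ // γ ∈ T} = N := Fintype.card_coe T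
  set e : {γ // γ ∈ T} ≃ Fin N := Fintype.equivFinOfCardEq hNcard with he
  set v : (Fin l → Bool) → Fin N → R :=
    fun s j => OrePBW.coeff E (OrePBW.wrd a b s) (e.symm j).1 with hv
  have hcard2 : N < Fintype.card (Fin l → Bool) := by
    have hc : Fintype.card (Fin l → Bool) = 2 ^ l := by
      rw [Fintype.card_fun]
      simp
    rw [hc, hTcard]
    exact hl
  obtain ⟨c, hc0, hcsum⟩ := OrePBW.LD hOre N _ v hcard2
  have hZcoeff : ∀ γ, OrePBW.coeff E (∑ s, E.ι (c s) * OrePBW.wrd a b s) γ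
      = ∑ s, c s * OrePBW.coeff E (OrePBW.wrd a b s) γ := by
    intro γ
    have h1 : OrePBW.coeff E (∑ s, E.ι (c s) * OrePBW.wrd a b s)
        = ∑ s, OrePBW.coeff E (E.ι (c s) * OrePBW.wrd a b s) :=
      map_sum (OrePBW.coeffHom E) _ _
    rw [h1, Finsupp.finset_sum_apply]
    refine Finset.sum_congr rfl fun s _ => ?_
    rw [OrePBW.coeff_iota_mul, Finsupp.smul_apply, smul_eq_mul]
  have hZzero : ∀ γ, (∑ s, c s * OrePBW.coeff E (OrePBW.wrd a b s) γ) = 0 := by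
    intro γ
    by_cases hγ : γ ∈ T
    · have h2 := congr_fun hcsum (e ⟨γ, hγ⟩)
      rw [Finset.sum_apply, Pi.zero_apply] at h2
      calc ∑ s, c s * OrePBW.coeff E (OrePBW.wrd a b s) γ
          = ∑ s, (c s • v s) (e ⟨γ, hγ⟩) := by
            refine Finset.sum_congr rfl fun s _ => ?_
            simp only [Pi.smul_apply, smul_eq_mul, hv, Equiv.symm_apply_apply]
        _ = 0 := h2
    · refine Finset.sum_eq_zero fun s _ => ?_
      have hnm : OrePBW.coeff E (OrePBW.wrd a b s) γ = 0 :=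
        Finsupp.notMem_support_iff.mp (fun hmem => hγ (hsupp s γ hmem))
      rw [hnm, mul_zero]
  have hZ : (∑ s, E.ι (c s) * OrePBW.wrd a b s) = 0 := by
    apply OrePBW.eq_zero_of_coeff_eq_zero E
    ext γ
    rw [hZcoeff γ, hZzero γ]
    rfl
  have hind := OrePBW.wrd_indep (OrePBW.pbw_one_ne_zero E) hmul ha hb hcon l
    (fun s => E.ι (c s)) hZ
  apply hc0
  funext s
  have h3 : E.ι (c s) = 0 := hind s
  exact E.ι_injective (h3.trans (map_zero E.ι).symm)
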